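/- Let r and s be nonzero integers with r > 0 and gcd(r, s) = 1, let n ≥ 2, and let (q_1, …, q_n) be nonzero integers satisfying the cyclic system of congruences r·((∏_{k=1}^n q_k)/q_i) ≡ s (mod |q_i|) for all 1 ≤ i ≤ n. Then gcd(q_1·q_2⋯q_n, s) = 1 holds if and only if the q_i are pairwise relatively prime, i.e. gcd(q_i, q_j) = 1 for all i ≠ j. -/

import Mathlib

open Finset

/-- For nonzero integers `q_i` satisfying the cyclic system
of congruences, `gcd(q_1 ⋯ q_n, s) = 1` holds iff the `q_i` are pairwise
relatively prime. -/
theorem gcd_prod_s_iff_pairwise_coprime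
    (r s : ℤ) (hr : 0 < r) (hs : s ≠ 0) (hrs : Int.gcd r s = 1)
    (n : ℕ) (hn : 2 ≤ n)
    (q : Fin n → ℤ) (hq : ∀ i, q i ≠ 0)
    (hcong : ∀ i, q i ∣ r * (∏ k ∈ Finset.univ.erase i, q k) - s) :
    Int.gcd (∏ i, q i) s = 1 ↔ ∀ i j, i ≠ j → Int.gcd (q i) (q j) = 1 := by
  constructor
  · intro h i j hij
    by_contra hne
    obtain ⟨p, hp, hpd⟩ := Nat.exists_prime_and_dvd hne
    have hpi : (p : ℤ) ∣ q i :=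
      dvd_trans (Int.natCast_dvd_natCast.mpr hpd) (Int.gcd_dvd_left _ _)
    have hpj : (p : ℤ) ∣ q j :=
      dvd_trans (Int.natCast_dvd_natCast.mpr hpd) (Int.gcd_dvd_right _ _)
    have hjmem : j ∈ Finset.univ.erase i := by
      simp [Finset.mem_erase, hij.symm]
    have hprod : (p : ℤ) ∣ ∏ k ∈ Finset.univ.erase i, q k :=
      dvd_trans hpj (Finset.dvd_prod_of_mem q hjmem)
    have h1 : (p : ℤ) ∣ r * (∏ k ∈ Finset.univ.erase i, q k) - s :=
      dvd_trans hpi (hcong i)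
    have h2 : (p : ℤ) ∣ r * (∏ k ∈ Finset.univ.erase i, q k) :=
      Dvd.dvd.mul_left hprod r
    have hps : (p : ℤ) ∣ s := by
      have := dvd_sub h2 h1
      simpa using this
    have hpp : (p : ℤ) ∣ ∏ k, q k :=
      dvd_trans hpi (Finset.dvd_prod_of_mem q (Finset.mem_univ i))
    have hg : (p : ℤ) ∣ (Int.gcd (∏ i, q i) s : ℤ) := Int.dvd_coe_gcd hpp hps
    rw [h] at hg
    exact hp.one_lt.ne' (by exact_mod_cast Int.eq_one_of_dvd_one (by positivity) hg)
  · intro h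
    by_contra hne
    obtain ⟨p, hp, hpd⟩ := Nat.exists_prime_and_dvd hne
    have hpprod : (p : ℤ) ∣ ∏ k, q k :=
      dvd_trans (Int.natCast_dvd_natCast.mpr hpd) (Int.gcd_dvd_left _ _)
    have hps : (p : ℤ) ∣ s :=
      dvd_trans (Int.natCast_dvd_natCast.mpr hpd) (Int.gcd_dvd_right _ _)
    have hpz : Prime (p : ℤ) := Nat.prime_iff_prime_int.mp hp
    obtain ⟨i, _, hpi⟩ := hpz.exists_mem_finset_dvd hpprod
    have h1 : (p : ℤ) ∣ r * (∏ k ∈ Finset.univ.erase i, q k) - s :=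
      dvd_trans hpi (hcong i)
    have h2 : (p : ℤ) ∣ r * (∏ k ∈ Finset.univ.erase i, q k) := by
      have := dvd_add h1 hps
      simpa using this
    rcases hpz.dvd_mul.mp h2 with hpr | hpr
    · have hg : (p : ℤ) ∣ (Int.gcd r s : ℤ) := Int.dvd_coe_gcd hpr hps
      rw [hrs] at hg
      exact hp.one_lt.ne' (by exact_mod_cast Int.eq_one_of_dvd_one (by positivity) hg)
    · obtain ⟨j, hjmem, hpj⟩ := hpz.exists_mem_finset_dvd hpr
      have hij : i ≠ j := fun e => (Finset.mem_erase.mp hjmem).1 e.symm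
      have hg : (p : ℤ) ∣ (Int.gcd (q i) (q j) : ℤ) := Int.dvd_coe_gcd hpi hpj
      rw [h i j hij] at hg
      exact hp.one_lt.ne' (by exact_mod_cast Int.eq_one_of_dvd_one (by positivity) hg)
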